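/- (Feasibility of upper bounds) Let P be a finite point set, O a set of centers with Σ_{p∈P} d_r(p, O) ≤ G, and let p₀ ∈ P. Suppose α > r is such that |ball(p₀, α)| ≥ G/α, where ball(p₀, α) = {p ∈ P : d(p, p₀) ≤ α}. Then d(p₀, O) ≤ 3α. -/
import Mathlib


theorem stmt_5 {M : Type*} [MetricSpace M] (P : Finset M) (O : Finset M) (hO : O.Nonempty)
    (r G α : ℝ) (hr : 0 ≤ r) (hG : 0 < G) (p₀ : M) (hp₀ : p₀ ∈ P)
    (hcost : ∑ p ∈ P, max (O.inf' hO (fun o => dist p o) - r) 0 ≤ G)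
    (hα : r < α)
    (hball : (G / α : ℝ) ≤ (P.filter (fun p => dist p p₀ ≤ α)).card) :
    O.inf' hO (fun o => dist p₀ o) ≤ 3 * α := by
  by_contra hcon
  push_neg at hcon
  have hα0 : 0 < α := lt_of_le_of_lt hr hα
  set B := P.filter (fun p => dist p p₀ ≤ α) with hB
  -- each point of B has d_r > α
  have hkey : ∀ p ∈ B, α < max (O.inf' hO (fun o => dist p o) - r) 0 := by
    intro p hp
    simp only [hB, Finset.mem_filter] at hp
    have h1 : O.inf' hO (fun o => dist p₀ o) - α ≤ O.inf' hO (fun o => dist p o) := by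
      rw [sub_le_iff_le_add]
      obtain ⟨o, ho, heq⟩ := Finset.exists_mem_eq_inf' hO (fun o => dist p o)
      rw [heq]
      calc O.inf' hO (fun o => dist p₀ o) ≤ dist p₀ o := Finset.inf'_le _ ho
        _ ≤ dist p₀ p + dist p o := dist_triangle _ _ _
        _ ≤ dist p o + α := by rw [dist_comm p₀ p]; linarith [hp.2]
    have : 2 * α < O.inf' hO (fun o => dist p o) := by linarith
    have : α < O.inf' hO (fun o => dist p o) - r := by linarith
    exact lt_max_of_lt_left this
  have hcard : 0 < B.card := by
    have : (0:ℝ) < (B.card : ℝ) := lt_of_lt_of_le (div_pos hG hα0) hball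
    exact_mod_cast this
  have hBne : B.Nonempty := Finset.card_pos.mp hcard
  have hsumB : (B.card : ℝ) * α < ∑ p ∈ B, max (O.inf' hO (fun o => dist p o) - r) 0 := by
    rw [Finset.card_eq_sum_ones B, Nat.cast_sum, Finset.sum_mul]
    apply Finset.sum_lt_sum_of_nonempty hBne
    intro p hp
    simpa using hkey p hp
  have hG' : G ≤ (B.card : ℝ) * α := by
    rw [div_le_iff₀ hα0] at hball
    linarith
  have hsub : ∑ p ∈ B, max (O.inf' hO (fun o => dist p o) - r) 0 ≤
      ∑ p ∈ P, max (O.inf' hO (fun o => dist p o) - r) 0 := by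
    apply Finset.sum_le_sum_of_subset_of_nonneg (Finset.filter_subset _ _)
    intro i _ _
    exact le_max_right _ _
  linarith
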